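/- Let M ≥ 1, n ≥ 1, C : ZMod M → Matrix (Fin n) (Fin n) ℂ with (C (−j))ᴴ = C j for all j (so that the associated block-circulant matrix X, X (i,a) (j,b) = (C (j − i)) a b, is Hermitian). Then the unique nearest positive semidefinite matrix P to X in Frobenius norm is itself block-circulant: there exists C' : ZMod M → Matrix (Fin n) (Fin n) ℂ with P (i,a) (j,b) = (C' (j − i)) a b for all i, j, a, b. -/

import Mathlib

open Matrix
open scoped ComplexOrder

/-- Frobenius norm of a complex matrix. -/
noncomputable def frobNorm {n : Type*} [Fintype n] (M : Matrix n n ℂ) : ℝ :=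
  Real.sqrt (∑ x, ∑ y, ‖M x y‖ ^ 2)

/-- `P` is a nearest positive semidefinite matrix to `C` in Frobenius norm. -/
noncomputable def IsNearestPSD {n : Type*} [Fintype n] [DecidableEq n]
    (C P : Matrix n n ℂ) : Prop :=
  P.PosSemidef ∧ ∀ S : Matrix n n ℂ, S.PosSemidef → frobNorm (P - C) ≤ frobNorm (S - C)

section Aux

variable {ι : Type*} [Fintype ι] [DecidableEq ι]

/-- View a matrix as a Euclidean vector indexed by pairs. -/
def eu (A : Matrix ι ι ℂ) : EuclideanSpace ℂ (ι × ι) := WithLp.toLp 2 (fun p => A p.1 p.2)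

lemma eu_inj {A B : Matrix ι ι ℂ} (h : eu A = eu B) : A = B := by
  ext p q; exact congrArg (fun v => v (p, q)) h

lemma frobNorm_eq_norm (A : Matrix ι ι ℂ) : frobNorm A = ‖eu A‖ := by
  rw [EuclideanSpace.norm_eq, frobNorm, Fintype.sum_prod_type]
  rfl

omit [DecidableEq ι] in
lemma psd_half_add {A B : Matrix ι ι ℂ} (hA : A.PosSemidef) (hB : B.PosSemidef) :
    ((2 : ℂ)⁻¹ • (A + B)).PosSemidef := by
  refine PosSemidef.of_dotProduct_mulVec_nonneg ?_ fun x => ?_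
  · show ((2 : ℂ)⁻¹ • (A + B))ᴴ = _
    rw [conjTranspose_smul, conjTranspose_add, hA.1.eq, hB.1.eq]
    norm_num
  · rw [smul_mulVec, dotProduct_smul, smul_eq_mul]
    have h2 : (0 : ℂ) ≤ (2 : ℂ)⁻¹ := by
      rw [Complex.le_def]; norm_num
    refine mul_nonneg h2 ?_
    rw [add_mulVec, dotProduct_add]
    exact add_nonneg (hA.dotProduct_mulVec_nonneg x) (hB.dotProduct_mulVec_nonneg x)

/-- Uniqueness of the nearest PSD matrix. -/
lemma nearestPSD_unique {X P Q : Matrix ι ι ℂ}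
    (hP : IsNearestPSD X P) (hQ : IsNearestPSD X Q) : P = Q := by
  set u : EuclideanSpace ℂ (ι × ι) := eu (P - X) with hu
  set v : EuclideanSpace ℂ (ι × ι) := eu (Q - X) with hv
  have huv : ‖u‖ = ‖v‖ := by
    rw [hu, hv, ← frobNorm_eq_norm, ← frobNorm_eq_norm]
    exact le_antisymm (hP.2 Q hQ.1) (hQ.2 P hP.1)
  set R : Matrix ι ι ℂ := (2 : ℂ)⁻¹ • (P + Q) with hR
  have hRpsd : R.PosSemidef := psd_half_add hP.1 hQ.1
  have hmid : eu (R - X) = (2 : ℂ)⁻¹ • (u + v) := by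
    ext p
    show (R - X) p.1 p.2 = ((2 : ℂ)⁻¹ • (u + v)) p
    simp only [hR, hu, hv, Matrix.sub_apply, Matrix.smul_apply, Matrix.add_apply,
      PiLp.smul_apply, PiLp.add_apply, smul_eq_mul, eu, Matrix.sub_apply, PiLp.toLp_apply]
    ring
  have hle : ‖u‖ ≤ ‖(2 : ℂ)⁻¹ • (u + v)‖ := by
    rw [← hmid, hu, ← frobNorm_eq_norm, ← frobNorm_eq_norm]
    exact hP.2 R hRpsd
  have h2 : ‖(2 : ℂ)⁻¹ • (u + v)‖ = 2⁻¹ * ‖u + v‖ := by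
    rw [norm_smul]; norm_num
  have hpar : ‖u + v‖ ^ 2 + ‖u - v‖ ^ 2 = 2 * (‖u‖ ^ 2 + ‖v‖ ^ 2) := by
    have h3 := @parallelogram_law_with_norm ℂ _ _ _ _ u v
    calc ‖u + v‖ ^ 2 + ‖u - v‖ ^ 2 = ‖u + v‖ * ‖u + v‖ + ‖u - v‖ * ‖u - v‖ := by ring
      _ = 2 * (‖u‖ * ‖u‖ + ‖v‖ * ‖v‖) := by linarith [h3]
      _ = 2 * (‖u‖ ^ 2 + ‖v‖ ^ 2) := by ring
  have h4 : 2 * ‖u‖ ≤ ‖u + v‖ := by rw [h2] at hle; linarith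
  have h5 : ‖u - v‖ ^ 2 ≤ 0 := by
    have h9 : (2 * ‖u‖) ^ 2 ≤ ‖u + v‖ ^ 2 :=
      pow_le_pow_left₀ (by positivity) h4 2
    have hv2 : ‖v‖ ^ 2 = ‖u‖ ^ 2 := by rw [huv]
    nlinarith [hpar, hv2, h9]
  have h6 : u = v := by
    have h7 : ‖u - v‖ = 0 :=
      le_antisymm (by nlinarith [norm_nonneg (u - v)]) (norm_nonneg _)
    exact sub_eq_zero.mp (norm_eq_zero.mp h7)
  have : eu (P - X) = eu (Q - X) := by rw [← hu, ← hv, h6]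
  have h8 : P - X = Q - X := eu_inj this
  ext p q
  have := congrFun (congrFun h8 p) q
  simpa [Matrix.sub_apply, sub_left_inj] using this

end Aux

section Shift

variable {M n : ℕ} [NeZero M]

/-- Translation of indices by `k` in the block component. -/
def shiftEquiv' (M n : ℕ) (k : ZMod M) : (ZMod M × Fin n) ≃ (ZMod M × Fin n) :=
  (Equiv.addRight k).prodCongr (Equiv.refl (Fin n))

@[simp] lemma shiftEquiv'_apply (k : ZMod M) (p : ZMod M × Fin n) :
    shiftEquiv' M n k p = (p.1 + k, p.2) := rfl

/-- Conjugating a matrix by the translation permutation. -/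
def shiftMat (k : ZMod M) (A : Matrix (ZMod M × Fin n) (ZMod M × Fin n) ℂ) :
    Matrix (ZMod M × Fin n) (ZMod M × Fin n) ℂ :=
  A.submatrix (shiftEquiv' M n k) (shiftEquiv' M n k)

lemma shiftMat_sub (k : ZMod M) (A B : Matrix (ZMod M × Fin n) (ZMod M × Fin n) ℂ) :
    shiftMat k (A - B) = shiftMat k A - shiftMat k B := by
  ext p q; simp [shiftMat]

lemma frobNorm_shiftMat (k : ZMod M) (A : Matrix (ZMod M × Fin n) (ZMod M × Fin n) ℂ) :
    frobNorm (shiftMat k A) = frobNorm A := by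
  unfold frobNorm
  congr 1
  rw [← Equiv.sum_comp (shiftEquiv' M n k) (fun x => ∑ y, ‖A x y‖ ^ 2)]
  refine Finset.sum_congr rfl fun x _ => ?_
  rw [← Equiv.sum_comp (shiftEquiv' M n k) (fun y => ‖A (shiftEquiv' M n k x) y‖ ^ 2)]
  rfl

lemma shiftMat_psd (k : ZMod M) {A : Matrix (ZMod M × Fin n) (ZMod M × Fin n) ℂ}
    (hA : A.PosSemidef) : (shiftMat k A).PosSemidef :=
  hA.submatrix _

lemma shiftMat_circ (k : ZMod M) (C : ZMod M → Matrix (Fin n) (Fin n) ℂ) :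
    shiftMat k (Matrix.of fun p q : ZMod M × Fin n => C (q.1 - p.1) p.2 q.2)
      = Matrix.of fun p q : ZMod M × Fin n => C (q.1 - p.1) p.2 q.2 := by
  ext p q
  simp only [shiftMat, submatrix_apply, shiftEquiv'_apply, Matrix.of_apply]
  congr 1
  ring

lemma isNearestPSD_shiftMat (k : ZMod M) (C : ZMod M → Matrix (Fin n) (Fin n) ℂ)
    {P : Matrix (ZMod M × Fin n) (ZMod M × Fin n) ℂ}
    (hP : IsNearestPSD (Matrix.of fun p q : ZMod M × Fin n => C (q.1 - p.1) p.2 q.2) P) :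
    IsNearestPSD (Matrix.of fun p q : ZMod M × Fin n => C (q.1 - p.1) p.2 q.2)
      (shiftMat k P) := by
  set X : Matrix (ZMod M × Fin n) (ZMod M × Fin n) ℂ :=
    Matrix.of fun p q : ZMod M × Fin n => C (q.1 - p.1) p.2 q.2 with hX
  refine ⟨shiftMat_psd k hP.1, fun S hS => ?_⟩
  have hXk : ∀ m : ZMod M, shiftMat m X = X := fun m => shiftMat_circ m C
  have h1 : frobNorm (shiftMat k P - X) = frobNorm (P - X) := by
    conv_lhs => rw [← hXk k, ← shiftMat_sub, frobNorm_shiftMat]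
  have h2 : frobNorm (shiftMat (-k) S - X) = frobNorm (S - X) := by
    conv_lhs => rw [← hXk (-k), ← shiftMat_sub, frobNorm_shiftMat]
  rw [h1, ← h2]
  exact hP.2 _ (shiftMat_psd (-k) hS)

end Shift

/-- The nearest positive semidefinite matrix to a Hermitian block-circulant matrix is
itself block-circulant. -/
theorem stmt_11 (M n : ℕ) [NeZero M] (hn : 1 ≤ n)
    (C : ZMod M → Matrix (Fin n) (Fin n) ℂ) (hC : ∀ j, (C (-j))ᴴ = C j) :
    ∀ P : Matrix (ZMod M × Fin n) (ZMod M × Fin n) ℂ,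
      IsNearestPSD (Matrix.of fun p q : ZMod M × Fin n => C (q.1 - p.1) p.2 q.2) P →
      ∃ C' : ZMod M → Matrix (Fin n) (Fin n) ℂ,
        ∀ (i j : ZMod M) (a b : Fin n), P (i, a) (j, b) = C' (j - i) a b := by
  intro P hP
  refine ⟨fun j => Matrix.of fun a b => P (0, a) (j, b), fun i j a b => ?_⟩
  have hs : P = shiftMat i P := nearestPSD_unique hP (isNearestPSD_shiftMat i C hP)
  have := congrFun (congrFun hs ((0 : ZMod M), a)) (j - i, b)
  simp only [shiftMat, submatrix_apply, shiftEquiv'_apply, zero_add, sub_add_cancel] at this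
  simp [← this]
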